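/- Suppose 0 < σ < 1, ε^{k+1} ≥ ε^k − σ·χ(D, ε^k)/(∂χ/∂ε)(D, ε^k) and 0 < ε^{k+1} ≤ ε^k, where χ(D, ε) = (D + √(ε² + D²))/2. Then (1 − σ)·χ(D, ε^k) ≤ χ(D, ε^{k+1}). -/

import Mathlib

noncomputable def chi (D ε : ℝ) : ℝ := (D + Real.sqrt (ε ^ 2 + D ^ 2)) / 2

theorem chi_update_bound (D σ εk εk1 : ℝ) (hσ0 : 0 < σ) (hσ1 : σ < 1)
    (hεk : 0 < εk) (hεk1 : 0 < εk1) (hle : εk1 ≤ εk)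
    (hupd : εk - σ * chi D εk / (εk / (2 * Real.sqrt (εk ^ 2 + D ^ 2))) ≤ εk1) :
    (1 - σ) * chi D εk ≤ chi D εk1 := by
  unfold chi at *
  set s := Real.sqrt (εk ^ 2 + D ^ 2) with hs
  set s1 := Real.sqrt (εk1 ^ 2 + D ^ 2) with hs1
  have hs2 : s ^ 2 = εk ^ 2 + D ^ 2 := Real.sq_sqrt (by positivity)
  have hs12 : s1 ^ 2 = εk1 ^ 2 + D ^ 2 := Real.sq_sqrt (by positivity)
  have hspos : 0 < s := Real.sqrt_pos.mpr (by positivity)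
  have hs1pos : 0 < s1 := Real.sqrt_pos.mpr (by positivity)
  have hDs : 0 < D + s := by nlinarith [mul_pos hεk hεk]
  -- Cauchy-Schwarz: s1 * s ≥ εk1 * εk + D^2
  have hb : 0 < εk1 * εk + D ^ 2 := by positivity
  have hcs : εk1 * εk + D ^ 2 ≤ s1 * s := by
    nlinarith [sq_nonneg (D * (εk1 - εk)), mul_pos hs1pos hspos, sq_nonneg (s1 * s - εk1 * εk - D ^ 2)]
  -- from hupd: εk1 * εk ≥ εk^2 - σ * (D + s) * s
  have hupd' : εk ^ 2 - σ * (D + s) * s ≤ εk1 * εk := by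
    have h2 : εk - σ * ((D + s) / 2) * (2 * s) / εk ≤ εk1 := by
      have : σ * ((D + s) / 2) / (εk / (2 * s)) = σ * ((D + s) / 2) * (2 * s) / εk := by
        field_simp
      linarith [hupd, this.symm.le, this.le]
    have h3 := mul_le_mul_of_nonneg_right h2 hεk.le
    have hne : εk ≠ 0 := hεk.ne'
    field_simp at h3
    nlinarith [h3]
  nlinarith [hcs, hupd', hs2, hspos, mul_pos hspos hspos]
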